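/- arXiv:2211.09415 — 5 statements merged into one kernel-verified Lean document; each statement's English description precedes it below -/
import Mathlib

section
/- Let G = (V,E) be a finite connected simple graph, T a spanning tree of G rooted at s, and x ∈ V with x ≠ s such that the induced subgraph G \ {x} is connected (x is not a cut vertex). Then every connected component C of the induced subgraph G[V_x], where V_x = V(T_x) \ {x}, has an edge (u_C, v_C) of G with v_C ∈ C and u_C ∈ V \ V(T_x). -/
/-- A rooted spanning tree of the graph `G`, given by a root and a parent function:
the root is a fixed point of `parent`, every vertex reaches the root by iterating
`parent`, and every (parent, child) pair is an edge of `G`. -/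
structure RSTree {V : Type*} (G : SimpleGraph V) where
  root : V
  parent : V → V
  parent_root : parent root = root
  reaches : ∀ v : V, ∃ n : ℕ, parent^[n] v = root
  adj : ∀ v : V, v ≠ root → G.Adj (parent v) v

namespace RSTree

variable {V : Type*} {G : SimpleGraph V}

/-- `u` is an ancestor of `v` in `T`, i.e. `u` lies on the tree path `π(root, v)`;
includes `u = v`. -/
def Anc (T : RSTree G) (u v : V) : Prop := ∃ n : ℕ, T.parent^[n] v = u

/-- The vertex set `V(T_x)` of the subtree of `T` rooted at `x`. -/
def sub (T : RSTree G) (x : V) : Set V := {v | T.Anc x v}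

/-- `c` is a child of `v` in `T`. -/
def IsChild (T : RSTree G) (c v : V) : Prop := T.parent c = v ∧ c ≠ v

/-- `V_x = V(T_x) \ {x}`. -/
def Vx (T : RSTree G) (x : V) : Set V := {v | T.Anc x v ∧ v ≠ x}

end RSTree

/-- `v` and `w` are connected by a walk of `G` all of whose vertices lie in `S`
(i.e. they lie in the same connected component of the induced subgraph `G[S]`). -/
def ReachableWithin {V : Type*} (G : SimpleGraph V) (S : Set V) (v w : V) : Prop :=
  ∃ p : G.Walk v w, ∀ u ∈ p.support, u ∈ S

/-- `C` is (the vertex set of) a connected component of the induced subgraph `G[S]`. -/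
def IsCompOf {V : Type*} (G : SimpleGraph V) (S : Set V) (C : Set V) : Prop :=
  ∃ v ∈ S, C = {w | ReachableWithin G S v w}

lemma induce_walk_reachableWithin {V : Type*} {G : SimpleGraph V} {S : Set V}
    {a b : S} (p : (G.induce S).Walk a b) : ReachableWithin G S a b := by
  induction p with
  | nil => exact ⟨.nil, by simp⟩
  | cons h p ih =>
    obtain ⟨q, hq⟩ := ih
    refine ⟨.cons (by simpa using h) q, ?_⟩
    intro u hu
    rw [SimpleGraph.Walk.support_cons, List.mem_cons] at hu
    rcases hu with rfl | hu
    · exact Subtype.coe_prop _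
    · exact hq u hu

lemma extract_edge {V : Type*} {G : SimpleGraph V} (T : RSTree G) (x : V) :
    ∀ {v w : V} (p : G.Walk v w), (∀ u ∈ p.support, u ≠ x) → v ∈ T.Vx x →
    w ∉ T.sub x →
    ∃ u v' : V, G.Adj u v' ∧ ReachableWithin G (T.Vx x) v v' ∧ u ∉ T.sub x := by
  intro v w p
  induction p with
  | nil =>
    intro _ hv hw
    exact absurd hv.1 hw
  | @cons v c w h p ih =>
    intro hsup hv hw
    by_cases hc : c ∈ T.sub x
    · have hcx : c ≠ x := hsup c (by simp)
      obtain ⟨u, v', hadj, ⟨q, hq⟩, hu⟩ := ih (fun u hu => hsup u (by simp [hu]))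
        ⟨hc, hcx⟩ hw
      refine ⟨u, v', hadj, ⟨.cons h q, ?_⟩, hu⟩
      intro u hu
      rw [SimpleGraph.Walk.support_cons, List.mem_cons] at hu
      rcases hu with rfl | hu
      · exact hv
      · exact hq u hu
    · exact ⟨c, v, h.symm, ⟨.nil, by simpa using hv⟩, hc⟩

/-- Let `G` be a finite connected simple graph, `T` a spanning tree of
`G` rooted at `s`, and `x ≠ s` a vertex such that `G \ {x}` is connected (`x` is not a
cut vertex). Then every connected component `C` of the induced subgraph `G[V_x]`,
where `V_x = V(T_x) \ {x}`, has an edge `(u_C, v_C)` of `G` with `v_C ∈ C` and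
`u_C ∈ V \ V(T_x)`. -/
theorem stmt7 {V : Type*} [Fintype V] (G : SimpleGraph V) (hG : G.Connected)
    (T : RSTree G) (x : V) (hxs : x ≠ T.root)
    (hx : (G.induce (({x} : Set V)ᶜ)).Connected)
    (C : Set V) (hC : IsCompOf G (T.Vx x) C) :
    ∃ u v : V, G.Adj u v ∧ v ∈ C ∧ u ∉ T.sub x := by
  obtain ⟨v₀, hv₀, rfl⟩ := hC
  have hv₀x : v₀ ≠ x := hv₀.2
  have hrx : T.root ≠ x := fun h => hxs h.symm
  have hroot : T.root ∉ T.sub x := by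
    rintro ⟨n, hn⟩
    have : T.parent^[n] T.root = T.root := by
      clear hn; induction n with
      | zero => rfl
      | succ n ih => rw [Function.iterate_succ_apply, T.parent_root, ih]
    exact hxs ((this ▸ hn).symm)
  obtain ⟨p⟩ := hx.preconnected ⟨v₀, hv₀x⟩ ⟨T.root, hrx⟩
  obtain ⟨q, hq⟩ := induce_walk_reachableWithin p
  obtain ⟨u, v', hadj, hr, hu⟩ := extract_edge T x q (fun u hu => hq u hu) hv₀ hroot
  exact ⟨u, v', hadj, hr, hu⟩
end

section
/- Let x, y be an independent pair, both ≠ s, with G \ {x} and G \ {y} connected, and fix for each of them the component data and paths π_x(s,C) (C ∈ C_x) and π_y(s,C') (C' ∈ C_y). If y does not lie on π_x(s,C) for any C ∈ C_x, and x does not lie on π_y(s,C') for any C' ∈ C_y, then G \ {x,y} is connected. -/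
section Aux

variable {V : Type*} {G : SimpleGraph V}

lemma anc_refl (T : RSTree G) (v : V) : T.Anc v v := ⟨0, rfl⟩

lemma anc_parent (T : RSTree G) {u v : V} (h : T.Anc u (T.parent v)) : T.Anc u v := by
  obtain ⟨k, hk⟩ := h
  exact ⟨k + 1, by rw [Function.iterate_succ_apply]; exact hk⟩

lemma anc_total (T : RSTree G) {a b v : V} (h1 : T.Anc a v) (h2 : T.Anc b v) :
    T.Anc a b ∨ T.Anc b a := by
  obtain ⟨m, hm⟩ := h1
  obtain ⟨n, hn⟩ := h2
  rcases le_total m n with h | h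
  · right
    refine ⟨n - m, ?_⟩
    rw [← hm, ← Function.iterate_add_apply, Nat.sub_add_cancel h, hn]
  · left
    refine ⟨m - n, ?_⟩
    rw [← hn, ← Function.iterate_add_apply, Nat.sub_add_cancel h, hm]

lemma anc_root_eq (T : RSTree G) {u : V} (h : T.Anc u T.root) : u = T.root := by
  obtain ⟨n, hn⟩ := h
  rw [Function.iterate_fixed T.parent_root n] at hn
  exact hn.symm

lemma walk_anc_aux (T : RSTree G) :
    ∀ (n : ℕ) (v : V), T.parent^[n] v = T.root →
      ∃ p : G.Walk v T.root, ∀ u ∈ p.support, T.Anc u v := by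
  intro n
  induction n with
  | zero =>
    intro v hv
    simp only [Function.iterate_zero, id_eq] at hv
    subst hv
    exact ⟨SimpleGraph.Walk.nil, by simp [anc_refl]⟩
  | succ n ih =>
    intro v hv
    by_cases hvr : v = T.root
    · subst hvr
      exact ⟨SimpleGraph.Walk.nil, by simp [anc_refl]⟩
    · have hv' : T.parent^[n] (T.parent v) = T.root := by
        rw [← Function.iterate_succ_apply]; exact hv
      obtain ⟨p, hp⟩ := ih (T.parent v) hv'
      refine ⟨SimpleGraph.Walk.cons (T.adj v hvr).symm p, ?_⟩
      intro u hu
      rw [SimpleGraph.Walk.support_cons, List.mem_cons] at hu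
      rcases hu with rfl | hu
      · exact anc_refl T u
      · exact anc_parent T (hp u hu)

lemma walk_to_root (T : RSTree G) (v : V) :
    ∃ p : G.Walk v T.root, ∀ u ∈ p.support, T.Anc u v := by
  obtain ⟨n, hn⟩ := T.reaches v
  exact walk_anc_aux T n v hn

lemma reachable_induce {S : Set V} {v w : V} (hv : v ∈ S) (hw : w ∈ S)
    (p : G.Walk v w) (hp : ∀ u ∈ p.support, u ∈ S) :
    (G.induce S).Reachable ⟨v, hv⟩ ⟨w, hw⟩ := by
  induction p with
  | nil => exact SimpleGraph.Reachable.refl _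
  | @cons a b c h q ih =>
    have hb : b ∈ S := hp b (by simp)
    have hq : ∀ u ∈ q.support, u ∈ S := fun u hu => hp u (by simp [hu])
    have hadj : (G.induce S).Adj ⟨a, hv⟩ ⟨b, hb⟩ := h
    exact (hadj.reachable).trans (ih hb hw hq)

/-- The one-sided main construction: every vertex in `V_x` reaches the root by a
walk avoiding both `x` and `y`. -/
lemma side_walk (T : RSTree G) {x y : V}
    (hind₁ : ¬ T.Anc x y)
    (ucx vcx : Set V → V)
    (hux : ∀ C, IsCompOf G (T.Vx x) C →
      G.Adj (ucx C) (vcx C) ∧ vcx C ∈ C ∧ ucx C ∉ T.sub x)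
    (hnx : ∀ C, IsCompOf G (T.Vx x) C →
      y ∉ ({w | T.Anc w (ucx C)} ∪ {vcx C} : Set V))
    {v : V} (hvx : T.Anc x v) (hvne : v ≠ x) :
    ∃ p : G.Walk v T.root, ∀ u ∈ p.support, u ≠ x ∧ u ≠ y := by
  set C : Set V := {w | ReachableWithin G (T.Vx x) v w} with hCdef
  have hC : IsCompOf G (T.Vx x) C := ⟨v, ⟨hvx, hvne⟩, rfl⟩
  obtain ⟨hadj, hvc, huc⟩ := hux C hC
  obtain ⟨p₁, hp₁⟩ := hvc
  obtain ⟨p₂, hp₂⟩ := walk_to_root T (ucx C)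
  have hVxok : ∀ u, u ∈ T.Vx x → u ≠ x ∧ u ≠ y := by
    intro u hu
    refine ⟨hu.2, ?_⟩
    rintro rfl
    exact hind₁ hu.1
  refine ⟨p₁.append (SimpleGraph.Walk.cons hadj.symm p₂), ?_⟩
  intro u hu
  rw [SimpleGraph.Walk.mem_support_append_iff] at hu
  rcases hu with hu | hu
  · exact hVxok u (hp₁ u hu)
  · rw [SimpleGraph.Walk.support_cons, List.mem_cons] at hu
    rcases hu with rfl | hu
    · exact hVxok _ (hp₁ _ p₁.end_mem_support)
    · have hanc : T.Anc u (ucx C) := hp₂ u hu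
      constructor
      · rintro rfl
        exact huc hanc
      · rintro rfl
        exact hnx C hC (Or.inl hanc)

end Aux

/-- Let `x, y` be an independent pair (neither an ancestor of the
other in `T`), both different from the root `s`, with `G \ {x}` and `G \ {y}`
connected. Fix for each component `C` of `G[V_x]` an edge `(u_C, v_C)` of `G` with
`v_C ∈ C` and `u_C ∉ V(T_x)` (so that `π_x(s,C) = π(s,u_C) ∘ (u_C, v_C)`), and
similarly for `y`. If `y` does not lie on `π_x(s,C)` for any component `C` of
`G[V_x]`, and `x` does not lie on `π_y(s,C')` for any component `C'` of `G[V_y]`,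
then `G \ {x,y}` is connected. -/
theorem stmt8 {V : Type*} [Fintype V] (G : SimpleGraph V) (hG : G.Connected)
    (T : RSTree G) (x y : V)
    (hxs : x ≠ T.root) (hys : y ≠ T.root)
    (hind₁ : ¬ T.Anc x y) (hind₂ : ¬ T.Anc y x)
    (hx : (G.induce (({x} : Set V)ᶜ)).Connected)
    (hy : (G.induce (({y} : Set V)ᶜ)).Connected)
    (ucx vcx : Set V → V)
    (hux : ∀ C, IsCompOf G (T.Vx x) C →
      G.Adj (ucx C) (vcx C) ∧ vcx C ∈ C ∧ ucx C ∉ T.sub x)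
    (ucy vcy : Set V → V)
    (huy : ∀ C, IsCompOf G (T.Vx y) C →
      G.Adj (ucy C) (vcy C) ∧ vcy C ∈ C ∧ ucy C ∉ T.sub y)
    (hnx : ∀ C, IsCompOf G (T.Vx x) C →
      y ∉ ({w | T.Anc w (ucx C)} ∪ {vcx C} : Set V))
    (hny : ∀ C, IsCompOf G (T.Vx y) C →
      x ∉ ({w | T.Anc w (ucy C)} ∪ {vcy C} : Set V)) :
    (G.induce (({x, y} : Set V)ᶜ)).Connected := by
  have hrootS : T.root ∈ ({x, y} : Set V)ᶜ := by
    simp only [Set.mem_compl_iff, Set.mem_insert_iff, Set.mem_singleton_iff, not_or]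
    exact ⟨fun h => hxs h.symm, fun h => hys h.symm⟩
  have key : ∀ v : V, v ≠ x → v ≠ y →
      ∃ p : G.Walk v T.root, ∀ u ∈ p.support, u ≠ x ∧ u ≠ y := by
    intro v hvx hvy
    by_cases hax : T.Anc x v
    · exact side_walk T hind₁ ucx vcx hux hnx hax hvx
    · by_cases hay : T.Anc y v
      · obtain ⟨p, hp⟩ := side_walk T hind₂ ucy vcy huy hny hay hvy
        exact ⟨p, fun u hu => ⟨(hp u hu).2, (hp u hu).1⟩⟩
      · obtain ⟨p, hp⟩ := walk_to_root T v
        refine ⟨p, fun u hu => ⟨?_, ?_⟩⟩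
        · rintro rfl; exact hax (hp u hu)
        · rintro rfl; exact hay (hp u hu)
  haveI : Nonempty (({x, y} : Set V)ᶜ : Set V) := ⟨⟨T.root, hrootS⟩⟩
  refine ⟨?_⟩
  · rintro ⟨a, ha⟩ ⟨b, hb⟩
    have haS : a ≠ x ∧ a ≠ y := by
      simpa only [Set.mem_compl_iff, Set.mem_insert_iff, Set.mem_singleton_iff,
        not_or] using ha
    have hbS : b ≠ x ∧ b ≠ y := by
      simpa only [Set.mem_compl_iff, Set.mem_insert_iff, Set.mem_singleton_iff,
        not_or] using hb
    obtain ⟨pa, hpa⟩ := key a haS.1 haS.2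
    obtain ⟨pb, hpb⟩ := key b hbS.1 hbS.2
    have hSa : ∀ u ∈ pa.support, u ∈ ({x, y} : Set V)ᶜ := by
      intro u hu
      simp only [Set.mem_compl_iff, Set.mem_insert_iff, Set.mem_singleton_iff, not_or]
      exact hpa u hu
    have hSb : ∀ u ∈ pb.support, u ∈ ({x, y} : Set V)ᶜ := by
      intro u hu
      simp only [Set.mem_compl_iff, Set.mem_insert_iff, Set.mem_singleton_iff, not_or]
      exact hpb u hu
    exact (reachable_induce ha hrootS pa hSa).trans
      (reachable_induce hb hrootS pb hSb).symm
end

section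
/- Let x, y be an independent pair, both ≠ s, with G \ {x} and G \ {y} connected, with fixed component data and paths for both. If a component C ∈ C_x is not fully-y-sensitive (i.e., C ∉ FS(x,y)), then some vertex of C is connected to s by a path in G \ {x,y} that avoids all vertices of all components in FS(x,y) ∪ FS(y,x). -/
namespace RSTree

variable {V : Type*} {G : SimpleGraph V}

lemma anc_refl (T : RSTree G) (a : V) : T.Anc a a := ⟨0, rfl⟩

lemma anc_trans (T : RSTree G) {a b c : V} (h1 : T.Anc a b) (h2 : T.Anc b c) : T.Anc a c := by
  obtain ⟨m, hm⟩ := h1; obtain ⟨n, hn⟩ := h2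
  exact ⟨m + n, by rw [Function.iterate_add_apply, hn, hm]⟩

lemma anc_total (T : RSTree G) {a b c : V} (h1 : T.Anc a c) (h2 : T.Anc b c) :
    T.Anc a b ∨ T.Anc b a := by
  obtain ⟨m, hm⟩ := h1; obtain ⟨n, hn⟩ := h2
  rcases le_total m n with h | h
  · right
    refine ⟨n - m, ?_⟩
    rw [← hm, ← Function.iterate_add_apply, Nat.sub_add_cancel h, hn]
  · left
    refine ⟨m - n, ?_⟩
    rw [← hn, ← Function.iterate_add_apply, Nat.sub_add_cancel h, hm]

lemma iterate_root (T : RSTree G) (k : ℕ) : T.parent^[k] T.root = T.root :=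
  Function.iterate_fixed T.parent_root k

lemma anc_antisymm (T : RSTree G) {a b : V} (h1 : T.Anc a b) (h2 : T.Anc b a) : a = b := by
  obtain ⟨m, hm⟩ := h1; obtain ⟨n, hn⟩ := h2
  rcases Nat.eq_zero_or_pos (m + n) with h0 | hpos
  · obtain ⟨hm0, hn0⟩ := Nat.add_eq_zero.mp h0
    subst hn0; simpa using hn
  · have hper : T.parent^[m + n] a = a := by
      rw [Function.iterate_add_apply, hn, hm]
    have hmul : ∀ j : ℕ, T.parent^[j * (m + n)] a = a := by
      intro j
      induction j with
      | zero => simp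
      | succ j ih => rw [Nat.succ_mul, Function.iterate_add_apply, hper, ih]
    obtain ⟨N, hN⟩ := T.reaches a
    have haroot : a = T.root := by
      have h1 : N ≤ N * (m + n) := Nat.le_mul_of_pos_right N hpos
      calc a = T.parent^[N * (m + n)] a := (hmul N).symm
        _ = T.parent^[N * (m + n) - N] (T.parent^[N] a) := by
            rw [← Function.iterate_add_apply, Nat.sub_add_cancel h1]
        _ = T.root := by rw [hN, T.iterate_root]
    rw [haroot] at hn ⊢
    rw [T.iterate_root] at hn
    exact hn

lemma walkDown (T : RSTree G) : ∀ (n : ℕ) (b : V), ∃ p : G.Walk (T.parent^[n] b) b,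
    ∀ w ∈ p.support, ∃ k ≤ n, w = T.parent^[k] b := by
  intro n
  induction n with
  | zero =>
    intro b
    exact ⟨SimpleGraph.Walk.nil, by simp⟩
  | succ n ih =>
    intro b
    by_cases hb : b = T.root
    · subst hb
      refine ⟨(SimpleGraph.Walk.nil).copy (by rw [T.iterate_root]) rfl, ?_⟩
      intro w hw
      simp only [SimpleGraph.Walk.support_copy, SimpleGraph.Walk.support_nil,
        List.mem_singleton] at hw
      exact ⟨0, Nat.zero_le _, hw⟩
    · obtain ⟨p, hp⟩ := ih (T.parent b)
      refine ⟨(p.concat (T.adj b hb)).copy (by rw [Function.iterate_succ_apply]) rfl, ?_⟩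
      intro w hw
      simp only [SimpleGraph.Walk.support_copy, SimpleGraph.Walk.support_concat,
        List.concat_eq_append, List.mem_append, List.mem_singleton] at hw
      rcases hw with hw | hw
      · obtain ⟨k, hk, hkw⟩ := hp w hw
        exact ⟨k + 1, Nat.succ_le_succ hk, by rw [hkw, Function.iterate_succ_apply]⟩
      · exact ⟨0, Nat.zero_le _, hw⟩


end RSTree

/-- The connected component of `v` in the induced subgraph `G[S]` (as a vertex set). -/
def CompOfVert {V : Type*} (G : SimpleGraph V) (S : Set V) (v : V) : Set V :=
  {w | ReachableWithin G S v w}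

section RW

variable {V : Type*} {G : SimpleGraph V} {S : Set V} {u v w : V}

lemma ReachableWithin.refl (hv : v ∈ S) : ReachableWithin G S v v :=
  ⟨SimpleGraph.Walk.nil, by simpa⟩

lemma ReachableWithin.symm (h : ReachableWithin G S v w) : ReachableWithin G S w v := by
  obtain ⟨p, hp⟩ := h
  exact ⟨p.reverse, by simpa using hp⟩

lemma ReachableWithin.trans (h1 : ReachableWithin G S u v) (h2 : ReachableWithin G S v w) :
    ReachableWithin G S u w := by
  obtain ⟨p, hp⟩ := h1; obtain ⟨q, hq⟩ := h2
  refine ⟨p.append q, ?_⟩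
  intro z hz
  rcases (SimpleGraph.Walk.mem_support_append_iff p q).mp hz with h | h
  · exact hp z h
  · exact hq z h

lemma ReachableWithin.mem_right (h : ReachableWithin G S v w) : w ∈ S := by
  obtain ⟨p, hp⟩ := h
  exact hp w p.end_mem_support

lemma compOf_subset {C : Set V} (h : IsCompOf G S C) : C ⊆ S := by
  obtain ⟨v0, _, rfl⟩ := h
  intro w hw
  exact ReachableWithin.mem_right hw

lemma compOf_eq_of_mem {C₁ C₂ : Set V} (h1 : IsCompOf G S C₁) (h2 : IsCompOf G S C₂)
    (hw1 : w ∈ C₁) (hw2 : w ∈ C₂) : C₁ = C₂ := by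
  obtain ⟨v1, _, rfl⟩ := h1
  obtain ⟨v2, _, rfl⟩ := h2
  ext z
  constructor
  · intro hz
    exact (hw2.trans ((hw1 : ReachableWithin G S v1 w).symm.trans hz) : _)
  · intro hz
    exact (hw1.trans ((hw2 : ReachableWithin G S v2 w).symm.trans hz) : _)

end RW

/-- The vertex set of the path `π_x(s,C) = π(s, u_C) ∘ (u_C, v_C)` associated to a
component `C` (given the choice functions `uc, vc` of the edge `(u_C, v_C)`): it
consists of all ancestors of `u_C` together with `v_C`. -/
def CompPath {V : Type*} {G : SimpleGraph V} (T : RSTree G)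
    (uc vc : Set V → V) (C : Set V) : Set V :=
  {w | T.Anc w (uc C)} ∪ {vc C}

/-- `C ∈ 𝒞_x` is pseudo-`y`-sensitive: the path `π_x(s,C)` contains a tree edge
`(y, y')` from `y` to a child `y'` of `y` such that `x` does not lie on
`π_y(s, C_{y,y'})`. Here `ucx, vcx` are the edge choices for components of `G[V_x]`
and `ucy, vcy` those for components of `G[V_y]`. -/
def PseudoSens {V : Type*} {G : SimpleGraph V} (T : RSTree G)
    (ucx vcx ucy vcy : Set V → V) (x y : V) (C : Set V) : Prop :=
  ∃ y', T.IsChild y' y ∧ T.Anc y' (ucx C) ∧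
    x ∉ CompPath T ucy vcy (CompOfVert G (T.Vx y) y')

/-- `C ∈ 𝒞_x` is fully-`y`-sensitive: `y` lies on `π_x(s,C)` (i.e. `C` is
`y`-sensitive) and `C` is not pseudo-`y`-sensitive. -/
def FullySens {V : Type*} {G : SimpleGraph V} (T : RSTree G)
    (ucx vcx ucy vcy : Set V → V) (x y : V) (C : Set V) : Prop :=
  y ∈ CompPath T ucx vcx C ∧ ¬ PseudoSens T ucx vcx ucy vcy x y C

/-- Let `x, y` be an independent pair, both `≠ s`, with `G \ {x}` and
`G \ {y}` connected, with fixed component edge-choices for both. If a component `C` of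
`G[V_x]` is not fully-`y`-sensitive (i.e. `C ∉ FS(x,y)`), then some vertex of `C` is
connected to `s` by a path in `G \ {x,y}` avoiding all vertices of all components in
`FS(x,y) ∪ FS(y,x)`. -/
theorem stmt9 {V : Type*} [Fintype V] (G : SimpleGraph V) (hG : G.Connected)
    (T : RSTree G) (x y : V)
    (hxs : x ≠ T.root) (hys : y ≠ T.root)
    (hind₁ : ¬ T.Anc x y) (hind₂ : ¬ T.Anc y x)
    (hx : (G.induce (({x} : Set V)ᶜ)).Connected)
    (hy : (G.induce (({y} : Set V)ᶜ)).Connected)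
    (ucx vcx : Set V → V)
    (hux : ∀ C, IsCompOf G (T.Vx x) C →
      G.Adj (ucx C) (vcx C) ∧ vcx C ∈ C ∧ ucx C ∉ T.sub x)
    (ucy vcy : Set V → V)
    (huy : ∀ C, IsCompOf G (T.Vx y) C →
      G.Adj (ucy C) (vcy C) ∧ vcy C ∈ C ∧ ucy C ∉ T.sub y)
    (C : Set V) (hC : IsCompOf G (T.Vx x) C)
    (hCnot : ¬ FullySens T ucx vcx ucy vcy x y C) :
    ∃ v ∈ C, ∃ p : G.Walk T.root v, ∀ w ∈ p.support,
      w ≠ x ∧ w ≠ y ∧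
      (∀ C', IsCompOf G (T.Vx x) C' → FullySens T ucx vcx ucy vcy x y C' → w ∉ C') ∧
      (∀ C', IsCompOf G (T.Vx y) C' → FullySens T ucy vcy ucx vcx y x C' → w ∉ C') := by
  classical
  open SimpleGraph in
  obtain ⟨hadjC, hvC, huCx⟩ := hux C hC
  have hyy' : ∀ y'' : V, T.parent y'' = y → T.Anc y y'' := fun y'' h => ⟨1, by simpa using h⟩
  have hVxy_disj : ∀ w, w ∈ T.Vx x → w ∈ T.Vx y → False := by
    rintro w ⟨hxw, -⟩ ⟨hyw, -⟩
    rcases T.anc_total hxw hyw with h | h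
    · exact hind₁ h
    · exact hind₂ h
  have hxny : x ∉ T.Vx y := fun h => hind₂ h.1
  have hynx : y ∉ T.Vx x := fun h => hind₁ h.1
  have good_out : ∀ w, w ≠ x → w ≠ y → w ∉ T.Vx x → w ∉ T.Vx y →
      (w ≠ x ∧ w ≠ y ∧
      (∀ C', IsCompOf G (T.Vx x) C' → FullySens T ucx vcx ucy vcy x y C' → w ∉ C') ∧
      (∀ C', IsCompOf G (T.Vx y) C' → FullySens T ucy vcy ucx vcx y x C' → w ∉ C')) :=
    fun w h1 h2 h3 h4 =>
      ⟨h1, h2, fun C' hC' _ hw => h3 (compOf_subset hC' hw),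
        fun C' hC' _ hw => h4 (compOf_subset hC' hw)⟩
  have good_anc : ∀ u, ¬ T.Anc x u → ¬ T.Anc y u → ∀ w, T.Anc w u →
      (w ≠ x ∧ w ≠ y ∧
      (∀ C', IsCompOf G (T.Vx x) C' → FullySens T ucx vcx ucy vcy x y C' → w ∉ C') ∧
      (∀ C', IsCompOf G (T.Vx y) C' → FullySens T ucy vcy ucx vcx y x C' → w ∉ C')) := by
    intro u hxu hyu w hwu
    refine good_out w ?_ ?_ ?_ ?_
    · rintro rfl; exact hxu hwu
    · rintro rfl; exact hyu hwu
    · rintro ⟨hxw, -⟩; exact hxu (T.anc_trans hxw hwu)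
    · rintro ⟨hyw, -⟩; exact hyu (T.anc_trans hyw hwu)
  have good_compx : ∀ w ∈ C,
      (w ≠ x ∧ w ≠ y ∧
      (∀ C', IsCompOf G (T.Vx x) C' → FullySens T ucx vcx ucy vcy x y C' → w ∉ C') ∧
      (∀ C', IsCompOf G (T.Vx y) C' → FullySens T ucy vcy ucx vcx y x C' → w ∉ C')) := by
    intro w hw
    have hwVx : w ∈ T.Vx x := compOf_subset hC hw
    refine ⟨hwVx.2, ?_, ?_, ?_⟩
    · rintro rfl; exact hynx hwVx
    · intro C' hC' hFS hw'
      exact hCnot (by rw [compOf_eq_of_mem hC hC' hw hw']; exact hFS)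
    · intro C' hC' _ hw'
      exact hVxy_disj w hwVx (compOf_subset hC' hw')
  by_cases hps : PseudoSens T ucx vcx ucy vcy x y C
  · -- Case 2: C is pseudo-y-sensitive
    obtain ⟨y', ⟨hpy', hy'ne⟩, hancy', hxD⟩ := hps
    have hy'Vy : y' ∈ T.Vx y := ⟨hyy' y' hpy', hy'ne⟩
    have hDcomp : IsCompOf G (T.Vx y) (CompOfVert G (T.Vx y) y') :=
      ⟨y', hy'Vy, rfl⟩
    obtain ⟨hadjD, hvD, huDy⟩ := huy _ hDcomp
    have hDnotFS : ¬ FullySens T ucy vcy ucx vcx y x (CompOfVert G (T.Vx y) y') :=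
      fun h => hxD h.1
    have hxuD : ¬ T.Anc x (ucy (CompOfVert G (T.Vx y) y')) := fun h => hxD (Or.inl h)
    have hyuD : ¬ T.Anc y (ucy (CompOfVert G (T.Vx y) y')) := fun h => huDy h
    have good_compy : ∀ w ∈ CompOfVert G (T.Vx y) y',
        (w ≠ x ∧ w ≠ y ∧
        (∀ C', IsCompOf G (T.Vx x) C' → FullySens T ucx vcx ucy vcy x y C' → w ∉ C') ∧
        (∀ C', IsCompOf G (T.Vx y) C' → FullySens T ucy vcy ucx vcx y x C' → w ∉ C')) := by
      intro w hw
      have hwVy : w ∈ T.Vx y := compOf_subset hDcomp hw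
      refine ⟨?_, hwVy.2, ?_, ?_⟩
      · rintro rfl; exact hxny hwVy
      · intro C' hC' _ hw'
        exact hVxy_disj w (compOf_subset hC' hw') hwVy
      · intro C' hC' hFS hw'
        exact hDnotFS (by rw [compOf_eq_of_mem hDcomp hC' hw hw']; exact hFS)
    obtain ⟨n, hn⟩ := hancy'
    have hsub : ∀ k, k ≤ n → T.parent^[k] (ucx C) ∈ T.Vx y := by
      intro k hk
      have hy'anc : T.Anc y' (T.parent^[k] (ucx C)) :=
        ⟨n - k, by rw [← Function.iterate_add_apply, Nat.sub_add_cancel hk, hn]⟩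
      refine ⟨T.anc_trans (hyy' y' hpy') hy'anc, ?_⟩
      intro heq
      rw [heq] at hy'anc
      exact hy'ne (T.anc_antisymm hy'anc (hyy' y' hpy'))
    have hmemD : ∀ k, k ≤ n → T.parent^[k] (ucx C) ∈ CompOfVert G (T.Vx y) y' := by
      intro k hk
      obtain ⟨q, hq⟩ := T.walkDown (n - k) (T.parent^[k] (ucx C))
      have hstart : T.parent^[n - k] (T.parent^[k] (ucx C)) = y' := by
        rw [← Function.iterate_add_apply, Nat.sub_add_cancel hk, hn]
      refine ⟨q.copy hstart rfl, ?_⟩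
      intro z hz
      rw [SimpleGraph.Walk.support_copy] at hz
      obtain ⟨j, hj, rfl⟩ := hq z hz
      rw [← Function.iterate_add_apply]
      exact hsub (j + k) (by omega)
    obtain ⟨N, hN⟩ := T.reaches (ucy (CompOfVert G (T.Vx y) y'))
    obtain ⟨pa, hpa⟩ := T.walkDown N (ucy (CompOfVert G (T.Vx y) y'))
    obtain ⟨qc, hqc⟩ := id hvD
    obtain ⟨pd, hpd⟩ := T.walkDown n (ucx C)
    refine ⟨vcx C, hvC,
      ((pa.copy hN rfl).concat hadjD).append
        (qc.reverse.append ((pd.copy hn rfl).concat hadjC)), ?_⟩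
    intro w hw
    rw [SimpleGraph.Walk.mem_support_append_iff] at hw
    rcases hw with hw | hw
    · simp only [SimpleGraph.Walk.support_concat, SimpleGraph.Walk.support_copy,
        List.concat_eq_append, List.mem_append, List.mem_singleton] at hw
      rcases hw with hw | rfl
      · obtain ⟨k, hk, rfl⟩ := hpa w hw
        exact good_anc _ hxuD hyuD _ ⟨k, rfl⟩
      · exact good_compy _ hvD
    · rw [SimpleGraph.Walk.mem_support_append_iff] at hw
      rcases hw with hw | hw
      · rw [SimpleGraph.Walk.support_reverse, List.mem_reverse] at hw
        have hwD : w ∈ CompOfVert G (T.Vx y) y' :=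
          ⟨qc.takeUntil w hw, fun z hz => hqc z (qc.support_takeUntil_subset hw hz)⟩
        exact good_compy _ hwD
      · simp only [SimpleGraph.Walk.support_concat, SimpleGraph.Walk.support_copy,
          List.concat_eq_append, List.mem_append, List.mem_singleton] at hw
        rcases hw with hw | rfl
        · obtain ⟨k, hk, rfl⟩ := hpd w hw
          exact good_compy _ (hmemD k hk)
        · exact good_compx _ hvC
  · -- Case 1: y does not lie on π_x(s, C)
    have hyC : y ∉ CompPath T ucx vcx C := fun h => hCnot ⟨h, hps⟩
    have hyanc : ¬ T.Anc y (ucx C) := fun h => hyC (Or.inl h)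
    have hxanc : ¬ T.Anc x (ucx C) := fun h => huCx h
    obtain ⟨n, hn⟩ := T.reaches (ucx C)
    obtain ⟨p, hp⟩ := T.walkDown n (ucx C)
    refine ⟨vcx C, hvC, (p.copy hn rfl).concat hadjC, ?_⟩
    intro w hw
    simp only [SimpleGraph.Walk.support_concat, SimpleGraph.Walk.support_copy,
      List.concat_eq_append, List.mem_append, List.mem_singleton] at hw
    rcases hw with hw | rfl
    · obtain ⟨k, hk, rfl⟩ := hp w hw
      exact good_anc _ hxanc hyanc _ ⟨k, rfl⟩
    · exact good_compx _ hvC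
end

section
/- Suppose the rooted tree T has depth at most D. For each mutual pair x,y (i.e., a heavy pair with r(x) = y and r(y) = x), fix one ordering of the pair and define the path Π_{x,y} := π(x, v_{H_x}) followed by the edge (v_{H_x}, u_{H_x}) followed by π(u_{H_x}, y). Then every vertex of G lies on at most 2(D+1) of the paths in {Π_{x,y} : x,y a mutual pair}. (Indeed, each vertex belongs to at most one mutual pair; a vertex a can lie on the first segment of Π_{x,y} only if x is an ancestor of a, and on the last segment only if y is an ancestor of a.) -/
/-- `hch` is a valid designation of heavy children: for every non-leaf vertex `v`,
`hch v` is a child of `v` whose subtree has the maximum number of vertices among all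
children of `v`. -/
def HchValid {V : Type*} {G : SimpleGraph V} (T : RSTree G) (hch : V → V) : Prop :=
  ∀ v : V, (∃ c, T.IsChild c v) →
    T.IsChild (hch v) v ∧ ∀ c, T.IsChild c v → (T.sub c).ncard ≤ (T.sub (hch v)).ncard

/-- The family `uc, vc` of edge choices is valid: for every `x ≠ s` with `G \ {x}`
connected and every connected component `C` of `G[V_x]`, `(uc x C, vc x C)` is an edge
of `G` with `vc x C ∈ C` and `uc x C ∉ V(T_x)`. -/
def GoodChoice {V : Type*} (G : SimpleGraph V) (T : RSTree G)
    (uc vc : V → Set V → V) : Prop :=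
  ∀ x : V, x ≠ T.root → (G.induce (({x} : Set V)ᶜ)).Connected →
    ∀ C, IsCompOf G (T.Vx x) C →
      G.Adj (uc x C) (vc x C) ∧ vc x C ∈ C ∧ uc x C ∉ T.sub x

/-- `x, y` is a heavy pair: an independent pair, both non-leaves of `T`, both `≠ s`,
with `G \ {x}` and `G \ {y}` connected, such that every fully-`y`-sensitive component
`C ∈ FS(x,y)` has the tree edge `(y, y_h)` on `π_x(s,C)` and every fully-`x`-sensitive
component `C ∈ FS(y,x)` has the tree edge `(x, x_h)` on `π_y(s,C)`. -/
def HeavyPair {V : Type*} {G : SimpleGraph V} (T : RSTree G) (hch : V → V)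
    (uc vc : V → Set V → V) (x y : V) : Prop :=
  x ≠ T.root ∧ y ≠ T.root ∧ ¬ T.Anc x y ∧ ¬ T.Anc y x ∧
  T.IsChild (hch x) x ∧ T.IsChild (hch y) y ∧
  (G.induce (({x} : Set V)ᶜ)).Connected ∧ (G.induce (({y} : Set V)ᶜ)).Connected ∧
  (∀ C, IsCompOf G (T.Vx x) C → FullySens T (uc x) (vc x) (uc y) (vc y) x y C →
    T.Anc (hch y) (uc x C)) ∧
  (∀ C, IsCompOf G (T.Vx y) C → FullySens T (uc y) (vc y) (uc x) (vc x) y x C →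
    T.Anc (hch x) (uc y C))

/-- The vertex set of the channel `Π_{x,y} = π(x, v_{H_x}) ∘ (v_{H_x}, u_{H_x}) ∘
π(u_{H_x}, y)` associated to a mutual pair `x, y` (for the chosen ordering): the
vertices of the tree path from `x` down to `v_{H_x}` together with the vertices of the
tree path from `y` down to `u_{H_x}`. -/
def MutPath {V : Type*} {G : SimpleGraph V} (T : RSTree G) (hch : V → V)
    (uc vc : V → Set V → V) (x y : V) : Set V :=
  {w | T.Anc x w ∧ T.Anc w (vc x (CompOfVert G (T.Vx x) (hch x)))} ∪
  {w | T.Anc y w ∧ T.Anc w (uc x (CompOfVert G (T.Vx x) (hch x)))}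

/-- Suppose the rooted tree `T` has depth at most `D`, and let
`r : V → V` be the lowest-common-ancestor function `x ↦ r(x) = LCA(R(x))` (as
specified by the hypothesis `hr`). A heavy pair `x, y` is mutual if `r x = y` and
`r y = x`; to each (ordering of a) mutual pair associate the channel `Π_{x,y}`.
Then every vertex of `G` lies on at most `2(D+1)` of the channels: each vertex
belongs to at most one mutual pair, a vertex `a` can lie on the first segment of
`Π_{x,y}` only if `x` is an ancestor of `a`, and on the last segment only if `y`
is an ancestor of `a`. -/
theorem stmt15 {V : Type*} [Fintype V] (G : SimpleGraph V) (hG : G.Connected)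
    (T : RSTree G) (hch : V → V) (hhch : HchValid T hch)
    (uc vc : V → Set V → V) (hgood : GoodChoice G T uc vc)
    (D : ℕ) (hdepth : ∀ v : V, ∃ n ≤ D, T.parent^[n] v = T.root)
    (r : V → V)
    (hr : ∀ x : V, x ≠ T.root → (G.induce (({x} : Set V)ᶜ)).Connected →
      T.IsChild (hch x) x →
      (∀ a : V, (a ∉ T.sub x ∧ ∃ b ∈ CompOfVert G (T.Vx x) (hch x), G.Adj a b) →
        T.Anc (r x) a) ∧
      (∀ w : V, (∀ a : V,
          (a ∉ T.sub x ∧ ∃ b ∈ CompOfVert G (T.Vx x) (hch x), G.Adj a b) →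
          T.Anc w a) → T.Anc w (r x)))
    (a : V) :
    {p : V × V | HeavyPair T hch uc vc p.1 p.2 ∧ r p.1 = p.2 ∧ r p.2 = p.1 ∧
        a ∈ MutPath T hch uc vc p.1 p.2}.ncard ≤ 2 * (D + 1) := by
  classical
  set A : Finset V := (Finset.range (D+1)).image (fun n => T.parent^[n] a) with hA
  -- every ancestor of `a` lies in `A`
  have hanc : ∀ u : V, T.Anc u a → u ∈ A := by
    intro u hu
    obtain ⟨n, hn⟩ := hu
    obtain ⟨N, hND, hN⟩ := hdepth a
    by_cases h : n ≤ D
    · exact Finset.mem_image.2 ⟨n, Finset.mem_range.2 (Nat.lt_succ_of_le h), hn⟩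
    · have hnN : N ≤ n := le_trans hND (le_of_not_ge h)
      have : T.parent^[n] a = T.root := by
        have : T.parent^[n] a = T.parent^[n - N] (T.parent^[N] a) := by
          rw [← Function.iterate_add_apply]
          congr 1
          omega
        rw [this, hN, Function.iterate_fixed T.parent_root]
      exact Finset.mem_image.2 ⟨N, Finset.mem_range.2 (Nat.lt_succ_of_le hND),
        by rw [hN, ← this, hn]⟩
  set S := {p : V × V | HeavyPair T hch uc vc p.1 p.2 ∧ r p.1 = p.2 ∧ r p.2 = p.1 ∧
        a ∈ MutPath T hch uc vc p.1 p.2} with hS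
  have key : ∀ p ∈ S, T.Anc p.1 a ∨ T.Anc p.2 a := by
    rintro p ⟨_, _, _, hmem⟩
    rcases hmem with h | h
    · exact Or.inl h.1
    · exact Or.inr h.1
  have hle : S.ncard ≤ ((A ×ˢ ({false, true} : Finset Bool) : Finset (V × Bool)) : Set (V × Bool)).ncard := by
    apply Set.ncard_le_ncard_of_injOn
      (fun p => if T.Anc p.1 a then (p.1, false) else (p.2, true))
    · intro p hp
      by_cases h : T.Anc p.1 a
      · simp only [h, if_pos]
        refine Finset.mem_coe.2 (Finset.mem_product.2 ⟨hanc _ h, by simp⟩)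
      · simp only [h, if_neg, not_false_iff]
        have := (key p hp).resolve_left h
        refine Finset.mem_coe.2 (Finset.mem_product.2 ⟨hanc _ this, by simp⟩)
    · intro p hp q hq hpq
      dsimp only at hpq
      by_cases h1 : T.Anc p.1 a <;> by_cases h2 : T.Anc q.1 a
      · rw [if_pos h1, if_pos h2] at hpq
        have h1' : p.1 = q.1 := (Prod.ext_iff.1 hpq).1
        have : p.2 = q.2 := by rw [← hp.2.1, ← hq.2.1, h1']
        exact Prod.ext h1' this
      · rw [if_pos h1, if_neg h2] at hpq
        exact absurd (Prod.ext_iff.1 hpq).2 (by simp)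
      · rw [if_neg h1, if_pos h2] at hpq
        exact absurd (Prod.ext_iff.1 hpq).2 (by simp)
      · rw [if_neg h1, if_neg h2] at hpq
        have h2' : p.2 = q.2 := (Prod.ext_iff.1 hpq).1
        have : p.1 = q.1 := by rw [← hp.2.2.1, ← hq.2.2.1, h2']
        exact Prod.ext this h2'
  calc S.ncard ≤ ((A ×ˢ ({false, true} : Finset Bool) : Finset (V × Bool)) : Set (V × Bool)).ncard := hle
    _ = (A ×ˢ ({false, true} : Finset Bool)).card := Set.ncard_coe_finset _
    _ = A.card * 2 := by rw [Finset.card_product]; simp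
    _ ≤ (D + 1) * 2 := by
        have : A.card ≤ D + 1 := le_trans Finset.card_image_le (by simp)
        omega
    _ = 2 * (D + 1) := by ring
end

section
/- Suppose the rooted tree T has depth at most D. For each ordered light pair ⟨x,y⟩, fix a witness component C = C^{⟨x,y⟩} ∈ FS(x,y) with the tree edge (y,y_h) not on π_x(s,C), and define the channel path Π_{⟨x,y⟩} := π(x, v_C) followed by the edge (v_C, u_C) followed by π(u_C, y). Then (i) each channel Π_{⟨x,y⟩} has at most 2D+1 edges, and (ii) every vertex of G is an internal vertex (a vertex other than the endpoints x, y) of at most (D+1)·(log₂(n)+1) + log₂(n)·(D+2) of the channels {Π_{⟨x,y⟩} : ⟨x,y⟩ an ordered light pair}. (Indeed, an internal vertex a on the segment π(x,v_C) has x as a proper ancestor and satisfies y ∈ LA(u_{C_{x,a}}) ∪ {u_{C_{x,a}}}, while an internal vertex a on the segment π(u_C,y) satisfies y ∈ LA(a) and x ∈ π_y(s, C_{y,a}).) -/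
/-- `u` is a light ancestor of `v`: `u` lies on the root-to-`v` path, `u ≠ v`, and the
edge of this path leaving `u` towards `v` goes to a child `c` of `u` with
`c ≠ hch u`. -/
def LightAnc {V : Type*} {G : SimpleGraph V} (T : RSTree G) (hch : V → V)
    (u v : V) : Prop :=
  ∃ c : V, T.parent c = u ∧ c ≠ u ∧ T.Anc c v ∧ c ≠ hch u

/-- `⟨x,y⟩` is an ordered light pair: an independent pair, both `≠ s`, both non-leaves
of `T`, with `G \ {x}` and `G \ {y}` connected, such that there exists a
fully-`y`-sensitive component `C ∈ FS(x,y)` for which the tree edge `(y, y_h)` does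
not lie on `π_x(s,C)`. -/
def OrderedLightPair {V : Type*} {G : SimpleGraph V} (T : RSTree G) (hch : V → V)
    (uc vc : V → Set V → V) (x y : V) : Prop :=
  x ≠ T.root ∧ y ≠ T.root ∧ ¬ T.Anc x y ∧ ¬ T.Anc y x ∧
  T.IsChild (hch x) x ∧ T.IsChild (hch y) y ∧
  (G.induce (({x} : Set V)ᶜ)).Connected ∧ (G.induce (({y} : Set V)ᶜ)).Connected ∧
  ∃ C, IsCompOf G (T.Vx x) C ∧ FullySens T (uc x) (vc x) (uc y) (vc y) x y C ∧
    ¬ T.Anc (hch y) (uc x C)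

/-- The vertex set of the channel `Π_{⟨x,y⟩} = π(x, v_C) ∘ (v_C, u_C) ∘ π(u_C, y)`
associated to an ordered light pair `⟨x,y⟩` with chosen witness component
`C = Cw x y`: the vertices of the tree path from `x` down to `v_C` together with the
vertices of the tree path from `y` down to `u_C`. -/
def Channel {V : Type*} {G : SimpleGraph V} (T : RSTree G)
    (uc vc : V → Set V → V) (Cw : V → V → Set V) (x y : V) : Set V :=
  {w | T.Anc x w ∧ T.Anc w (vc x (Cw x y))} ∪
  {w | T.Anc y w ∧ T.Anc w (uc x (Cw x y))}

section Helpers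
namespace RSTree
variable {V : Type*} {G : SimpleGraph V} (T : RSTree G)

lemma anc_refl_s16 (v : V) : T.Anc v v := ⟨0, rfl⟩

lemma anc_trans_s16 {u v w : V} (h1 : T.Anc u v) (h2 : T.Anc v w) : T.Anc u w := by
  obtain ⟨n, hn⟩ := h1; obtain ⟨m, hm⟩ := h2
  exact ⟨n + m, by rw [Function.iterate_add_apply, hm, hn]⟩

lemma root_fix (n : ℕ) : T.parent^[n] T.root = T.root := by
  induction n with
  | zero => rfl
  | succ k ih => rw [Function.iterate_succ_apply, T.parent_root, ih]

lemma root_anc (v : V) : T.Anc T.root v := T.reaches v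

lemma anc_root {u : V} (h : T.Anc u T.root) : u = T.root := by
  obtain ⟨n, hn⟩ := h; rw [root_fix] at hn; exact hn.symm

lemma periodic_root {v : V} {k : ℕ} (hk : k ≠ 0) (h : T.parent^[k] v = v) : v = T.root := by
  obtain ⟨N, hN⟩ := T.reaches v
  have hiter : ∀ t, T.parent^[k * t] v = v := by
    intro t; induction t with
    | zero => rfl
    | succ s ih => rw [Nat.mul_succ, Function.iterate_add_apply, h, ih]
  have hkN : N ≤ k * N := Nat.le_mul_of_pos_left N (Nat.pos_of_ne_zero hk)
  have h2 : T.parent^[k * N] v = T.root := by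
    have h3 : k * N = (k * N - N) + N := (Nat.sub_add_cancel hkN).symm
    rw [h3, Function.iterate_add_apply, hN, root_fix]
  rw [hiter N] at h2; exact h2

lemma anc_antisymm_s16 {u v : V} (h1 : T.Anc u v) (h2 : T.Anc v u) : u = v := by
  obtain ⟨n, hn⟩ := h1; obtain ⟨m, hm⟩ := h2
  rcases Nat.eq_zero_or_pos (n + m) with h0 | hpos
  · obtain ⟨hn0, _⟩ := Nat.add_eq_zero.mp h0
    subst hn0; exact hn.symm
  · have hper : T.parent^[n + m] u = u := by
      rw [Function.iterate_add_apply, hm, hn]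
    have hu : u = T.root := T.periodic_root (by omega : n + m ≠ 0) hper
    have hv : v = T.root := by
      have h4 : T.Anc v u := ⟨m, hm⟩
      rw [hu] at h4; exact T.anc_root h4
    rw [hu, hv]

lemma anc_total_s16 {u v w : V} (h1 : T.Anc u w) (h2 : T.Anc v w) : T.Anc u v ∨ T.Anc v u := by
  obtain ⟨n, hn⟩ := h1; obtain ⟨m, hm⟩ := h2
  rcases le_total n m with h | h
  · right; exact ⟨m - n, by rw [← hn, ← Function.iterate_add_apply, Nat.sub_add_cancel h, hm]⟩
  · left; exact ⟨n - m, by rw [← hm, ← Function.iterate_add_apply, Nat.sub_add_cancel h, hn]⟩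

lemma child_anc {c u : V} (h : T.IsChild c u) : T.Anc u c := ⟨1, h.1⟩

lemma childToward {u v : V} (h : T.Anc u v) (hne : u ≠ v) :
    ∃ c, T.IsChild c u ∧ T.Anc c v := by
  classical
  have hex : ∃ n, T.parent^[n] v = u := h
  have hn : T.parent^[Nat.find hex] v = u := Nat.find_spec hex
  have hn0 : Nat.find hex ≠ 0 := by
    intro h0; rw [h0] at hn; exact hne hn.symm
  have h5 : Nat.find hex - 1 + 1 = Nat.find hex := Nat.sub_add_cancel (Nat.pos_of_ne_zero hn0)
  refine ⟨T.parent^[Nat.find hex - 1] v, ⟨?_, ?_⟩, ⟨Nat.find hex - 1, rfl⟩⟩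
  · calc T.parent (T.parent^[Nat.find hex - 1] v)
        = T.parent^[Nat.find hex - 1 + 1] v := (Function.iterate_succ_apply' _ _ _).symm
      _ = u := by rw [h5]; exact hn
  · intro hc
    exact Nat.find_min hex (Nat.sub_lt (Nat.pos_of_ne_zero hn0) one_pos) hc

lemma mem_sub_self (v : V) : v ∈ T.sub v := T.anc_refl_s16 v

lemma sub_subset_sub {u w : V} (h : T.Anc u w) : T.sub w ⊆ T.sub u :=
  fun _ hz => T.anc_trans_s16 h hz

lemma child_sub_subset {c u : V} (h : T.IsChild c u) : T.sub c ⊆ T.sub u \ {u} := by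
  intro w hw
  refine ⟨T.anc_trans_s16 (T.child_anc h) hw, ?_⟩
  intro hwu
  simp only [Set.mem_singleton_iff] at hwu
  subst hwu
  exact h.2 (T.anc_antisymm_s16 hw (T.child_anc h))

lemma anc_child_eq {a b u : V} (ha : T.IsChild a u) (hb : T.IsChild b u)
    (hab : T.Anc a b) : a = b := by
  obtain ⟨k, hk⟩ := hab
  rcases Nat.eq_zero_or_pos k with h0 | hpos
  · rw [h0] at hk; exact hk.symm
  · exfalso
    have hau : T.Anc a u := by
      refine ⟨k - 1, ?_⟩
      rw [show k - 1 = k - 1 from rfl]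
      have : T.parent^[k-1] (T.parent b) = T.parent^[k] b := by
        rw [← Function.iterate_succ_apply, Nat.succ_eq_add_one,
          Nat.sub_add_cancel hpos]
      rw [← hb.1, this, hk]
    exact ha.2 (T.anc_antisymm_s16 hau (T.child_anc ha))

lemma children_disjoint {c c' u : V} (h : T.IsChild c u) (h' : T.IsChild c' u)
    (hne : c ≠ c') : Disjoint (T.sub c) (T.sub c') := by
  rw [Set.disjoint_left]
  intro w hw hw'
  rcases T.anc_total_s16 (u := c) (v := c') (w := w) hw hw' with hc | hc
  · exact hne (T.anc_child_eq h h' hc)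
  · exact hne (T.anc_child_eq h' h hc).symm

end RSTree
end Helpers
section Helpers2
variable {V : Type*} {G : SimpleGraph V}

lemma rw_refl {S : Set V} {v : V} (hv : v ∈ S) : ReachableWithin G S v v :=
  ⟨SimpleGraph.Walk.nil, by simp [hv]⟩

lemma rw_symm {S : Set V} {v w : V} (h : ReachableWithin G S v w) :
    ReachableWithin G S w v := by
  obtain ⟨p, hp⟩ := h
  exact ⟨p.reverse, by simpa using hp⟩

lemma rw_trans {S : Set V} {u v w : V} (h1 : ReachableWithin G S u v)
    (h2 : ReachableWithin G S v w) : ReachableWithin G S u w := by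
  obtain ⟨p, hp⟩ := h1; obtain ⟨q, hq⟩ := h2
  refine ⟨p.append q, fun z hz => ?_⟩
  rcases (SimpleGraph.Walk.mem_support_append_iff _ _).mp hz with h | h
  · exact hp z h
  · exact hq z h

lemma rw_mem_right {S : Set V} {v w : V} (h : ReachableWithin G S v w) : w ∈ S := by
  obtain ⟨p, hp⟩ := h
  exact hp w p.end_mem_support

lemma compOfVert_eq {S : Set V} {v w : V} (h : ReachableWithin G S v w) :
    CompOfVert G S v = CompOfVert G S w := by
  ext z
  constructor
  · exact fun hz => rw_trans (rw_symm h) hz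
  · exact fun hz => rw_trans h hz

lemma isCompOf_eq_compOfVert {S C : Set V} {v : V} (hC : IsCompOf G S C) (hv : v ∈ C) :
    C = CompOfVert G S v := by
  obtain ⟨v₀, _, rfl⟩ := hC
  exact compOfVert_eq hv

lemma isCompOf_subset {S C : Set V} (hC : IsCompOf G S C) : C ⊆ S := by
  obtain ⟨v₀, _, rfl⟩ := hC
  exact fun w hw => rw_mem_right hw

/-- The tree path from `a` down to `b` stays inside `V_x` when `x` is a strict
ancestor of `a` and `b` is a descendant of `a`. -/
lemma reach_within_tree (T : RSTree G) {x a : V} (hxr : x ≠ T.root)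
    (hxa : T.Anc x a) (hax : a ≠ x) :
    ∀ n (b : V), T.parent^[n] b = a → ReachableWithin G (T.Vx x) a b := by
  have hmem : ∀ w : V, T.Anc a w → w ∈ T.Vx x := by
    intro w hw
    refine ⟨T.anc_trans_s16 hxa hw, ?_⟩
    intro hwx
    rw [hwx] at hw
    exact hax (T.anc_antisymm_s16 hw hxa)
  intro n
  induction n with
  | zero =>
    intro b hb; subst hb
    exact rw_refl (hmem _ (T.anc_refl_s16 _))
  | succ k ih =>
    intro b hb
    by_cases hba : b = a
    · subst hba; exact rw_refl (hmem _ (T.anc_refl_s16 _))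
    · have hbr : b ≠ T.root := by
        rintro rfl
        rw [T.root_fix] at hb
        subst hb
        exact hxr (T.anc_root hxa)
      have hb' : T.parent^[k] (T.parent b) = a := by
        rw [← Function.iterate_succ_apply]; exact hb
      obtain ⟨p, hp⟩ := ih (T.parent b) hb'
      refine ⟨p.concat (T.adj b hbr), fun z hz => ?_⟩
      rw [SimpleGraph.Walk.support_concat] at hz
      rcases List.mem_append.mp hz with h | h
      · exact hp z h
      · rw [List.mem_singleton] at h
        subst h
        exact hmem z ⟨k + 1, hb⟩

end Helpers2
section Helpers3
variable {V : Type*} {G : SimpleGraph V}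

lemma anc_set_ncard (T : RSTree G) {v : V} {D : ℕ}
    (hd : ∃ n ≤ D, T.parent^[n] v = T.root) :
    {w | T.Anc w v}.ncard ≤ D + 1 := by
  obtain ⟨m, hmD, hm⟩ := hd
  have hsub : {w | T.Anc w v} ⊆ (fun k => T.parent^[k] v) '' Set.Iic D := by
    rintro w ⟨n, hn⟩
    by_cases h : n ≤ m
    · exact ⟨n, le_trans h hmD, hn⟩
    · have hw : w = T.root := by
        rw [← hn, show n = (n - m) + m by omega, Function.iterate_add_apply, hm, T.root_fix]
      exact ⟨m, hmD, by show T.parent^[m] v = w; rw [hm, hw]⟩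
  calc {w | T.Anc w v}.ncard ≤ ((fun k => T.parent^[k] v) '' Set.Iic D).ncard :=
        Set.ncard_le_ncard hsub ((Set.finite_Iic D).image _)
    _ ≤ (Set.Iic D).ncard := Set.ncard_image_le (Set.finite_Iic D)
    _ = D + 1 := by
        rw [Set.ncard_eq_toFinset_card' ]
        simp

variable [Fintype V]

lemma light_child_bound (T : RSTree G) {hch : V → V} (hhch : HchValid T hch)
    {c u : V} (hc : T.IsChild c u) (hlight : c ≠ hch u) :
    2 * (T.sub c).ncard + 1 ≤ (T.sub u).ncard := by
  classical
  have hh := hhch u ⟨c, hc⟩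
  have hdisj : Disjoint (T.sub c) (T.sub (hch u)) := T.children_disjoint hc hh.1 hlight
  have hsub : T.sub c ∪ T.sub (hch u) ⊆ T.sub u \ {u} :=
    Set.union_subset (T.child_sub_subset hc) (T.child_sub_subset hh.1)
  have h1 : (T.sub c).ncard + (T.sub (hch u)).ncard ≤ (T.sub u \ {u}).ncard := by
    rw [← Set.ncard_union_eq hdisj (Set.toFinite _) (Set.toFinite _)]
    exact Set.ncard_le_ncard hsub (Set.toFinite _)
  have h2 : (T.sub u \ {u}).ncard + 1 = (T.sub u).ncard :=
    Set.ncard_diff_singleton_add_one (T.mem_sub_self u) (Set.toFinite _)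
  have h3 : (T.sub c).ncard ≤ (T.sub (hch u)).ncard := hh.2 c hc
  omega

lemma two_pow_light (T : RSTree G) {hch : V → V} (hhch : HchValid T hch) (v : V) :
    ∀ N (u : V), (T.sub u).ncard ≤ N →
      2 ^ {w | LightAnc T hch w v ∧ T.Anc u w}.ncard ≤ (T.sub u).ncard := by
  intro N
  induction N using Nat.strong_induction_on with
  | _ N IH =>
  intro u hu
  have hanc_v : ∀ w, LightAnc T hch w v → T.Anc w v := by
    rintro w ⟨c, hcp, hcne, hcv, _⟩
    exact T.anc_trans_s16 (T.child_anc ⟨hcp, hcne⟩) hcv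
  by_cases hempty : {w | LightAnc T hch w v ∧ T.Anc u w} = ∅
  · rw [hempty]
    rw [Set.ncard_empty, pow_zero]; exact (Set.ncard_pos (Set.toFinite _)).mpr ⟨u, T.mem_sub_self u⟩
  · obtain ⟨w₀, hw₀L, hw₀max⟩ := Set.exists_max_image _ (fun w => (T.sub w).ncard)
      (Set.toFinite _) (Set.nonempty_iff_ne_empty.mpr hempty)
    have htop : ∀ w ∈ {w | LightAnc T hch w v ∧ T.Anc u w}, T.Anc w₀ w := by
      intro w hw
      rcases T.anc_total_s16 (hanc_v _ hw₀L.1) (hanc_v _ hw.1) with h | h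
      · exact h
      · have hsubeq : T.sub w₀ = T.sub w :=
          Set.eq_of_subset_of_ncard_le (T.sub_subset_sub h) (hw₀max w hw) (Set.toFinite _)
        have : w ∈ T.sub w₀ := by rw [hsubeq]; exact T.mem_sub_self w
        exact this
    obtain ⟨c₀, hc₀p, hc₀ne, hc₀v, hc₀h⟩ := hw₀L.1
    have hc₀child : T.IsChild c₀ w₀ := ⟨hc₀p, hc₀ne⟩
    have hkey : {w | LightAnc T hch w v ∧ T.Anc u w} =
        insert w₀ {w | LightAnc T hch w v ∧ T.Anc c₀ w} := by
      ext w
      constructor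
      · intro hw
        by_cases hww₀ : w = w₀
        · exact Or.inl hww₀
        · refine Or.inr ⟨hw.1, ?_⟩
          rcases T.anc_total_s16 hc₀v (hanc_v _ hw.1) with h | h
          · exact h
          · obtain ⟨k, hk⟩ := h
            rcases Nat.eq_zero_or_pos k with h0 | hpos
            · rw [h0] at hk; exact hk ▸ T.anc_refl_s16 _
            · exfalso
              have hww₀anc : T.Anc w w₀ := by
                refine ⟨k - 1, ?_⟩
                have : T.parent^[k-1] (T.parent c₀) = T.parent^[k] c₀ := by
                  rw [← Function.iterate_succ_apply, Nat.succ_eq_add_one,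
                    Nat.sub_add_cancel hpos]
                rw [← hc₀p, this, hk]
              exact hww₀ (T.anc_antisymm_s16 (htop w hw) hww₀anc).symm
      · rintro (rfl | hw)
        · exact hw₀L
        · exact ⟨hw.1, T.anc_trans_s16 hw₀L.2 (T.anc_trans_s16 (T.child_anc hc₀child) hw.2)⟩
    have hnotmem : w₀ ∉ {w | LightAnc T hch w v ∧ T.Anc c₀ w} := by
      rintro ⟨_, hanc⟩
      exact hc₀ne (T.anc_antisymm_s16 hanc (T.child_anc hc₀child))
    have hcard : {w | LightAnc T hch w v ∧ T.Anc u w}.ncard =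
        {w | LightAnc T hch w v ∧ T.Anc c₀ w}.ncard + 1 := by
      rw [hkey, Set.ncard_insert_of_notMem hnotmem (Set.toFinite _)]
    have hbound := light_child_bound T hhch hc₀child hc₀h
    have hsubw₀ : (T.sub w₀).ncard ≤ (T.sub u).ncard :=
      Set.ncard_le_ncard (T.sub_subset_sub hw₀L.2) (Set.toFinite _)
    have hc₀pos : 1 ≤ (T.sub c₀).ncard :=
      (Set.ncard_pos (Set.toFinite _)).mpr ⟨c₀, T.mem_sub_self c₀⟩
    have hlt : (T.sub c₀).ncard < N := by omega
    have hIH := IH _ hlt c₀ le_rfl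
    rw [hcard, pow_succ]
    omega

lemma la_ncard (T : RSTree G) {hch : V → V} (hhch : HchValid T hch) (v : V) :
    2 ^ {w | LightAnc T hch w v}.ncard ≤ Fintype.card V := by
  have h := two_pow_light T hhch v (T.sub T.root).ncard T.root le_rfl
  have heq : {w | LightAnc T hch w v ∧ T.Anc T.root w} = {w | LightAnc T hch w v} := by
    ext w; simp only [Set.mem_setOf_eq, and_iff_left_iff_imp]
    exact fun _ => T.root_anc w
  rw [heq] at h
  calc 2 ^ {w | LightAnc T hch w v}.ncard ≤ (T.sub T.root).ncard := h
    _ ≤ (Set.univ : Set V).ncard := Set.ncard_le_ncard (Set.subset_univ _) (Set.toFinite _)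
    _ = Fintype.card V := by rw [Set.ncard_univ, Nat.card_eq_fintype_card]

lemma dep_count (S : Set (V × V)) (A : Set V) (B : V → Set V) (m : ℕ)
    (hS : ∀ p ∈ S, p.1 ∈ A ∧ p.2 ∈ B p.1) (hB : ∀ x, (B x).ncard ≤ m) :
    S.ncard ≤ A.ncard * m := by
  classical
  have hsub : (Set.toFinite S).toFinset ⊆
      (Set.toFinite A).toFinset.biUnion
        (fun x => {x} ×ˢ (Set.toFinite (B x)).toFinset) := by
    intro p hp
    rw [Set.Finite.mem_toFinset] at hp
    obtain ⟨h1, h2⟩ := hS p hp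
    rw [Finset.mem_biUnion]
    exact ⟨p.1, (Set.Finite.mem_toFinset _).mpr h1, by
      rw [Finset.mem_product]
      exact ⟨Finset.mem_singleton_self _, (Set.Finite.mem_toFinset _).mpr h2⟩⟩
  calc S.ncard = (Set.toFinite S).toFinset.card := Set.ncard_eq_toFinset_card S _
    _ ≤ _ := Finset.card_le_card hsub
    _ ≤ ∑ x ∈ (Set.toFinite A).toFinset, ({x} ×ˢ (Set.toFinite (B x)).toFinset).card :=
        Finset.card_biUnion_le
    _ ≤ ∑ _x ∈ (Set.toFinite A).toFinset, m := by
        refine Finset.sum_le_sum fun x _ => ?_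
        rw [Finset.card_product, Finset.card_singleton, one_mul,
          ← Set.ncard_eq_toFinset_card (B x)]
        exact hB x
    _ = (Set.toFinite A).toFinset.card * m := by rw [Finset.sum_const, smul_eq_mul]
    _ = A.ncard * m := by rw [← Set.ncard_eq_toFinset_card A]

lemma dep_count' (S : Set (V × V)) (A : Set V) (B : V → Set V) (m : ℕ)
    (hS : ∀ p ∈ S, p.2 ∈ A ∧ p.1 ∈ B p.2) (hB : ∀ x, (B x).ncard ≤ m) :
    S.ncard ≤ A.ncard * m := by
  have h := dep_count (Prod.swap '' S) A B m (by rintro p ⟨q, hq, rfl⟩; exact hS q hq) hB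
  rwa [Set.ncard_image_of_injective S Prod.swap_injective] at h

end Helpers3
/-- Suppose the rooted tree `T` has depth at most `D`, and for each
ordered light pair `⟨x,y⟩` fix a witness component `C^{⟨x,y⟩} = Cw x y ∈ FS(x,y)` with
the tree edge `(y,y_h)` not on `π_x(s,C)`, defining the channel `Π_{⟨x,y⟩}`. Then
(i) each channel has at most `2D+1` edges, i.e. at most `2D+2` vertices, and
(ii) every vertex of `G` is an internal vertex (a vertex other than the endpoints
`x`, `y`) of at most `(D+1)·(log₂ n + 1) + log₂ n · (D+2)` of the channels. -/
theorem stmt16 {V : Type*} [Fintype V] (G : SimpleGraph V) (hG : G.Connected)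
    (T : RSTree G) (hch : V → V) (hhch : HchValid T hch)
    (uc vc : V → Set V → V) (hgood : GoodChoice G T uc vc)
    (D : ℕ) (hdepth : ∀ v : V, ∃ n ≤ D, T.parent^[n] v = T.root)
    (Cw : V → V → Set V)
    (hCw : ∀ x y : V, OrderedLightPair T hch uc vc x y →
      IsCompOf G (T.Vx x) (Cw x y) ∧
      FullySens T (uc x) (vc x) (uc y) (vc y) x y (Cw x y) ∧
      ¬ T.Anc (hch y) (uc x (Cw x y))) :
    (∀ x y : V, OrderedLightPair T hch uc vc x y →
      (Channel T uc vc Cw x y).ncard ≤ 2 * D + 2) ∧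
    (∀ a : V, ({p : V × V | OrderedLightPair T hch uc vc p.1 p.2 ∧
        a ∈ Channel T uc vc Cw p.1 p.2 ∧ a ≠ p.1 ∧ a ≠ p.2}.ncard : ℝ)
      ≤ (D + 1) * (Real.logb 2 (Fintype.card V) + 1)
        + Real.logb 2 (Fintype.card V) * (D + 2)) := by
  classical
  have hVne : Nonempty V := hG.nonempty
  constructor
  · -- Part (i)
    intro x y holp
    have hsub1 : {w | T.Anc x w ∧ T.Anc w (vc x (Cw x y))} ⊆ {w | T.Anc w (vc x (Cw x y))} :=
      fun w hw => hw.2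
    have hsub2 : {w | T.Anc y w ∧ T.Anc w (uc x (Cw x y))} ⊆ {w | T.Anc w (uc x (Cw x y))} :=
      fun w hw => hw.2
    calc (Channel T uc vc Cw x y).ncard
        ≤ {w | T.Anc x w ∧ T.Anc w (vc x (Cw x y))}.ncard
          + {w | T.Anc y w ∧ T.Anc w (uc x (Cw x y))}.ncard := Set.ncard_union_le _ _
      _ ≤ (D + 1) + (D + 1) := by
          gcongr
          · exact le_trans (Set.ncard_le_ncard hsub1 (Set.toFinite _))
              (anc_set_ncard T (hdepth _))
          · exact le_trans (Set.ncard_le_ncard hsub2 (Set.toFinite _))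
              (anc_set_ncard T (hdepth _))
      _ = 2 * D + 2 := by ring
  · -- Part (ii)
    intro a
    set n := Fintype.card V with hn
    have hnpos : 0 < n := Fintype.card_pos
    set K := Nat.log 2 n with hK
    set pA : Set V := {w | T.Anc w a ∧ w ≠ a} with hpA
    set LAa : Set V := {w | LightAnc T hch w a} with hLAa
    set B1 : V → Set V := fun x =>
      insert (uc x (CompOfVert G (T.Vx x) a))
        {w | LightAnc T hch w (uc x (CompOfVert G (T.Vx x) a))} with hB1
    set B2 : V → Set V := fun y =>
      CompPath T (uc y) (vc y) (CompOfVert G (T.Vx y) a) with hB2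
    set S1 : Set (V × V) := {p | p.1 ∈ pA ∧ p.2 ∈ B1 p.1} with hS1
    set S2 : Set (V × V) := {p | p.2 ∈ LAa ∧ p.1 ∈ B2 p.2} with hS2
    -- the key structural inclusion
    have hincl : {p : V × V | OrderedLightPair T hch uc vc p.1 p.2 ∧
        a ∈ Channel T uc vc Cw p.1 p.2 ∧ a ≠ p.1 ∧ a ≠ p.2} ⊆ S1 ∪ S2 := by
      rintro ⟨x, y⟩ ⟨holp, hach, hax, hay⟩
      obtain ⟨hComp, hFull, hnanc⟩ := hCw x y holp
      obtain ⟨hxr, hyr, hxy, hyx, hchx, hchy, hconnx, hconny, -⟩ := holp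
      obtain ⟨hadj, hvC, huC⟩ := hgood x hxr hconnx (Cw x y) hComp
      rcases hach with ⟨hxa, havC⟩ | ⟨hya, hauC⟩
      · -- a on π(x, v_C) : contribute to S1
        left
        refine ⟨⟨hxa, fun h => hax h.symm⟩, ?_⟩
        -- Cw x y is the component of a
        have hCa : Cw x y = CompOfVert G (T.Vx x) a := by
          obtain ⟨nn, hnn⟩ := havC
          have hRW : ReachableWithin G (T.Vx x) a (vc x (Cw x y)) :=
            reach_within_tree T hxr hxa hax nn _ hnn
          rw [isCompOf_eq_compOfVert hComp hvC, ← compOfVert_eq hRW]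
        have hyanc : T.Anc y (uc x (Cw x y)) := by
          rcases hFull.1 with h | h
          · exact h
          · exfalso
            rw [Set.mem_singleton_iff] at h
            have : vc x (Cw x y) ∈ T.Vx x := isCompOf_subset hComp hvC
            rw [← h] at this
            exact hxy this.1
        show y ∈ B1 x
        rw [hB1]
        simp only [← hCa]
        by_cases hyu : y = uc x (Cw x y)
        · exact Or.inl hyu
        · obtain ⟨c, hc, hcanc⟩ := T.childToward hyanc hyu
          right
          refine ⟨c, hc.1, hc.2, hcanc, ?_⟩
          rintro rfl
          exact hnanc hcanc
      · -- a on π(u_C, y) : contribute to S2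
        right
        have hya' : y ≠ a := fun h => hay h.symm
        obtain ⟨c, hc, hcanc⟩ := T.childToward hya hya'
        have hcu : T.Anc c (uc x (Cw x y)) := T.anc_trans_s16 hcanc hauC
        have hlight : c ≠ hch y := by
          rintro rfl
          exact hnanc hcu
        refine ⟨⟨c, hc.1, hc.2, hcanc, hlight⟩, ?_⟩
        -- x lies on π_y(s, C_{y,a})
        have hnps := hFull.2
        rw [PseudoSens] at hnps
        push_neg at hnps
        have hx := hnps c hc hcu
        have hcompeq : CompOfVert G (T.Vx y) c = CompOfVert G (T.Vx y) a := by
          obtain ⟨nn, hnn⟩ := hcanc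
          exact compOfVert_eq (reach_within_tree T hyr (T.child_anc hc) hc.2 nn a hnn)
        show x ∈ B2 y
        rw [hB2]
        simp only [← hcompeq]
        exact hx
    -- cardinality bounds
    have hpAcard : pA.ncard ≤ D + 1 :=
      le_trans (Set.ncard_le_ncard (fun w hw => hw.1) (Set.toFinite _))
        (anc_set_ncard T (hdepth a))
    have hlacard : ∀ v : V, {w | LightAnc T hch w v}.ncard ≤ K := by
      intro v
      have h := la_ncard T hhch v
      exact (Nat.le_log_iff_pow_le one_lt_two hnpos.ne').mpr h
    have hB1card : ∀ x, (B1 x).ncard ≤ K + 1 := by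
      intro x
      exact le_trans (Set.ncard_insert_le _ _) (by simpa using Nat.add_le_add_right (hlacard _) 1)
    have hB2card : ∀ y, (B2 y).ncard ≤ D + 2 := by
      intro y
      calc (B2 y).ncard ≤ {w | T.Anc w (uc y (CompOfVert G (T.Vx y) a))}.ncard
            + ({vc y (CompOfVert G (T.Vx y) a)} : Set V).ncard := Set.ncard_union_le _ _
        _ ≤ (D + 1) + 1 := by
            gcongr
            · exact anc_set_ncard T (hdepth _)
            · simp
        _ = D + 2 := by ring
    have hS1card : S1.ncard ≤ (D + 1) * (K + 1) := by
      refine le_trans (dep_count S1 pA B1 (K + 1) (fun p hp => hp) hB1card) ?_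
      exact Nat.mul_le_mul_right _ hpAcard
    have hS2card : S2.ncard ≤ K * (D + 2) := by
      refine le_trans (dep_count' S2 LAa B2 (D + 2) (fun p hp => hp) hB2card) ?_
      exact Nat.mul_le_mul_right _ (hlacard a)
    have hScard : {p : V × V | OrderedLightPair T hch uc vc p.1 p.2 ∧
        a ∈ Channel T uc vc Cw p.1 p.2 ∧ a ≠ p.1 ∧ a ≠ p.2}.ncard
        ≤ (D + 1) * (K + 1) + K * (D + 2) := by
      calc _ ≤ (S1 ∪ S2).ncard := Set.ncard_le_ncard hincl (Set.toFinite _)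
        _ ≤ S1.ncard + S2.ncard := Set.ncard_union_le _ _
        _ ≤ (D + 1) * (K + 1) + K * (D + 2) := Nat.add_le_add hS1card hS2card
    -- pass to the reals
    have hKlog : (K : ℝ) ≤ Real.logb 2 n := Real.natLog_le_logb n 2
    have hlognn : (0 : ℝ) ≤ Real.logb 2 n := by
      exact Real.logb_nonneg one_lt_two (by exact_mod_cast hnpos)
    calc ({p : V × V | OrderedLightPair T hch uc vc p.1 p.2 ∧
        a ∈ Channel T uc vc Cw p.1 p.2 ∧ a ≠ p.1 ∧ a ≠ p.2}.ncard : ℝ)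
        ≤ ((D + 1) * (K + 1) + K * (D + 2) : ℕ) := by exact_mod_cast hScard
      _ ≤ (D + 1) * (Real.logb 2 n + 1) + Real.logb 2 n * (D + 2) := by
          push_cast
          nlinarith [hKlog, hlognn]
end
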